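/- If two finite-outcome POVMs A and B on a finite-dimensional Hilbert space satisfy w(A) + w(B) ≥ 1, where w(A) = Σ_i λ_min(A_i) is the noise content, then A and B are compatible, i.e., there exists a POVM G with outcome set Ω_A × Ω_B such that Σ_j G(i,j) = A_i and Σ_i G(i,j) = B_j. -/

import Mathlib

open Matrix BigOperators
open scoped ComplexOrder

/-- Minimal eigenvalue of a (Hermitian) matrix; junk value 0 otherwise. -/
noncomputable def minEig {d : ℕ} (M : Matrix (Fin d) (Fin d) ℂ) : ℝ :=
  if h : M.IsHermitian then ⨅ j, h.eigenvalues j else 0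

/-- Noise content `w(A) = ∑ᵢ λ_min(Aᵢ)` of a POVM. -/
noncomputable def noiseContent {d k : ℕ} (A : Fin k → Matrix (Fin d) (Fin d) ℂ) : ℝ :=
  ∑ i, minEig (A i)

lemma minEig_eq {d : ℕ} {M : Matrix (Fin d) (Fin d) ℂ} (h : M.IsHermitian) :
    minEig M = ⨅ j, h.eigenvalues j := by rw [minEig, dif_pos h]

lemma minEig_le {d : ℕ} {M : Matrix (Fin d) (Fin d) ℂ} (h : M.IsHermitian) (j : Fin d) :
    minEig M ≤ h.eigenvalues j := by
  rw [minEig_eq h]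
  exact ciInf_le (Set.Finite.bddBelow (Set.finite_range _)) j

lemma minEig_nonneg {d : ℕ} (hd : 0 < d) {M : Matrix (Fin d) (Fin d) ℂ}
    (hM : M.PosSemidef) : 0 ≤ minEig M := by
  haveI : Nonempty (Fin d) := Fin.pos_iff_nonempty.mp hd
  rw [minEig_eq hM.1]
  exact le_ciInf fun j => hM.eigenvalues_nonneg j

lemma smul_posSemidef {d : ℕ} {c : ℝ} (hc : 0 ≤ c) {M : Matrix (Fin d) (Fin d) ℂ}
    (hM : M.PosSemidef) : ((c : ℂ) • M).PosSemidef := by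
  refine Matrix.PosSemidef.of_dotProduct_mulVec_nonneg ?_ fun x => ?_
  · show ((c : ℂ) • M)ᴴ = _
    rw [Matrix.conjTranspose_smul, hM.1.eq, Complex.star_def, Complex.conj_ofReal]
  · rw [smul_mulVec, dotProduct_smul]
    exact smul_nonneg (by exact_mod_cast hc) (hM.dotProduct_mulVec_nonneg x)

lemma sub_minEig_posSemidef {d : ℕ} {M : Matrix (Fin d) (Fin d) ℂ}
    (h : M.IsHermitian) : (M - (minEig M : ℂ) • 1).PosSemidef := by
  set U : Matrix (Fin d) (Fin d) ℂ := (h.eigenvectorUnitary : Matrix (Fin d) (Fin d) ℂ) with hUdef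
  have hU : U * star U = 1 := (Matrix.mem_unitaryGroup_iff).mp h.eigenvectorUnitary.2
  set c := minEig M with hc
  have hDiag : Matrix.diagonal (RCLike.ofReal ∘ h.eigenvalues) - (c : ℂ) • 1 =
      Matrix.diagonal (fun i => ((h.eigenvalues i - c : ℝ) : ℂ)) := by
    ext i j
    by_cases hij : i = j <;>
      simp [hij, Matrix.diagonal_apply, Matrix.one_apply, Complex.ofReal_sub, sub_eq_add_neg]
  have hscal : U * ((c : ℂ) • 1) * star U = (c : ℂ) • 1 := by
    rw [Matrix.mul_smul, mul_one, Matrix.smul_mul, hU]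
  have key : M - (c : ℂ) • 1 =
      U * (Matrix.diagonal (fun i => ((h.eigenvalues i - c : ℝ) : ℂ))) * star U := by
    rw [← hDiag, Matrix.mul_sub, Matrix.sub_mul, hscal]
    conv_lhs => rw [h.spectral_theorem]
    rw [Unitary.conjStarAlgAut_apply]
  rw [key, Matrix.star_eq_conjTranspose]
  refine Matrix.PosSemidef.mul_mul_conjTranspose_same ?_ _
  rw [Matrix.posSemidef_diagonal_iff]
  intro i
  rw [Complex.zero_le_real]
  linarith [minEig_le h i]

lemma posSemidef_sum {d n : ℕ} (N : Fin n → Matrix (Fin d) (Fin d) ℂ)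
    (h : ∀ i, (N i).PosSemidef) : (∑ i, N i).PosSemidef := by
  classical
  exact Finset.sum_induction _ (fun M : Matrix (Fin d) (Fin d) ℂ => M.PosSemidef)
    (fun a b ha hb => ha.add hb) Matrix.PosSemidef.zero (fun i _ => h i)

lemma scalar_nonneg_of_posSemidef {d : ℕ} (hd : 0 < d) {r : ℝ}
    (h : (((r : ℂ)) • (1 : Matrix (Fin d) (Fin d) ℂ)).PosSemidef) : 0 ≤ r := by
  have h2 := h.dotProduct_mulVec_nonneg (Pi.single ⟨0, hd⟩ 1)
  rw [smul_mulVec, one_mulVec, dotProduct_smul] at h2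
  have hx : star (Pi.single (⟨0, hd⟩ : Fin d) (1:ℂ)) ⬝ᵥ Pi.single (⟨0, hd⟩ : Fin d) (1:ℂ) = 1 := by
    simp [dotProduct_single]
  rw [hx] at h2
  simpa using (Complex.zero_le_real).mp (by simpa using h2)

lemma sum_sub_minEig {d n : ℕ} (N : Fin n → Matrix (Fin d) (Fin d) ℂ)
    (hsum : ∑ i, N i = 1) :
    ∑ i, (N i - (minEig (N i) : ℂ) • 1) = (((1 - ∑ i, minEig (N i) : ℝ)) : ℂ) • 1 := by
  rw [Finset.sum_sub_distrib, hsum, ← Finset.sum_smul]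
  have : ∑ i, ((minEig (N i) : ℂ)) = (((∑ i, minEig (N i) : ℝ)) : ℂ) := by push_cast; ring
  rw [this]
  push_cast
  rw [sub_smul, one_smul]

lemma noise_le_one {d n : ℕ} (hd : 0 < d) {N : Fin n → Matrix (Fin d) (Fin d) ℂ}
    (hN : ∀ i, (N i).PosSemidef) (hsum : ∑ i, N i = 1) :
    ∑ i, minEig (N i) ≤ 1 := by
  have hP := posSemidef_sum _ (fun i => sub_minEig_posSemidef (hN i).1)
  rw [sum_sub_minEig _ hsum] at hP
  linarith [scalar_nonneg_of_posSemidef hd hP]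

lemma eq_zero_of_sum_eq_zero {d n : ℕ} {N : Fin n → Matrix (Fin d) (Fin d) ℂ}
    (h : ∀ i, (N i).PosSemidef) (hsum : ∑ i, N i = 0) (i : Fin n) : N i = 0 := by
  have key : ∀ x : Fin d → ℂ, star x ⬝ᵥ (N i *ᵥ x) = 0 := by
    intro x
    have hsx : ∑ j, star x ⬝ᵥ (N j *ᵥ x) = 0 := by
      have : ∑ j, star x ⬝ᵥ (N j *ᵥ x) = star x ⬝ᵥ ((∑ j, N j) *ᵥ x) := by
        simp only [dotProduct, Matrix.mulVec, Finset.sum_apply, Finset.mul_sum, Finset.sum_mul]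
        rw [Finset.sum_comm]
        refine Finset.sum_congr rfl fun p _ => ?_
        rw [Finset.sum_comm]
        refine Finset.sum_congr rfl fun q _ => ?_
        simp only [Finset.sum_apply, Matrix.sum_apply, Finset.mul_sum, Finset.sum_mul]
      rw [this, hsum]
      simp
    exact (Finset.sum_eq_zero_iff_of_nonneg (fun j _ => (h j).dotProduct_mulVec_nonneg x)).mp hsx i (Finset.mem_univ i)
  have hx : ∀ x, N i *ᵥ x = 0 := fun x => ((h i).dotProduct_mulVec_zero_iff x).mp (key x)
  ext p q
  have := congrFun (hx (Pi.single q 1)) p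
  simpa [Matrix.mulVec_single] using this

lemma eq_scalar_of_noise_eq_one {d n : ℕ} {N : Fin n → Matrix (Fin d) (Fin d) ℂ}
    (hN : ∀ i, (N i).PosSemidef) (hsum : ∑ i, N i = 1)
    (hw : ∑ i, minEig (N i) = 1) (i : Fin n) : N i = (minEig (N i) : ℂ) • 1 := by
  have h0 : ∑ i, (N i - (minEig (N i) : ℂ) • 1) = 0 := by
    rw [sum_sub_minEig _ hsum, hw]; simp
  have := eq_zero_of_sum_eq_zero (fun i => sub_minEig_posSemidef (hN i).1) h0 i
  rwa [sub_eq_zero] at this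
lemma noise_main_case {d k l : ℕ}
    (A : Fin k → Matrix (Fin d) (Fin d) ℂ) (B : Fin l → Matrix (Fin d) (Fin d) ℂ)
    (hA : ∀ i, (A i).PosSemidef) (hAsum : ∑ i, A i = 1)
    (hB : ∀ j, (B j).PosSemidef) (hBsum : ∑ j, B j = 1)
    (han : ∀ i, 0 ≤ minEig (A i)) (hbn : ∀ j, 0 ≤ minEig (B j))
    (wA wB : ℝ) (hwa : ∑ i, minEig (A i) = wA) (hwb : ∑ j, minEig (B j) = wB)
    (hwApos : 0 < wA) (hwBpos : 0 < wB) (hge : 1 ≤ wA + wB) :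
    ∃ G : Fin k → Fin l → Matrix (Fin d) (Fin d) ℂ,
      (∀ i j, (G i j).PosSemidef) ∧
      (∀ i, ∑ j, G i j = A i) ∧
      (∀ j, ∑ i, G i j = B j) := by
  have hs : 0 ≤ wA + wB - 1 := by linarith
  refine ⟨fun i j =>
      ((minEig (A i) / wA : ℝ) : ℂ) • (B j - (minEig (B j) : ℂ) • 1) +
      ((minEig (B j) / wB : ℝ) : ℂ) • (A i - (minEig (A i) : ℂ) • 1) +
      ((minEig (A i) * minEig (B j) * (wA + wB - 1) / (wA * wB) : ℝ) : ℂ) • 1, ?_, ?_, ?_⟩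
  · intro i j
    exact ((smul_posSemidef (div_nonneg (han i) hwApos.le)
        (sub_minEig_posSemidef (hB j).1)).add
      (smul_posSemidef (div_nonneg (hbn j) hwBpos.le)
        (sub_minEig_posSemidef (hA i).1))).add
      (smul_posSemidef (div_nonneg (mul_nonneg (mul_nonneg (han i) (hbn j)) hs)
        (mul_nonneg hwApos.le hwBpos.le)) Matrix.PosSemidef.one)
  · intro i
    have e1 : ∑ j, ((minEig (A i) / wA : ℝ) : ℂ) • (B j - (minEig (B j) : ℂ) • 1)
        = ((minEig (A i) / wA : ℝ) : ℂ) • ((((1 - wB : ℝ)) : ℂ) • 1) := by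
      rw [← Finset.smul_sum, sum_sub_minEig B hBsum, hwb]
    have e2 : ∑ j, ((minEig (B j) / wB : ℝ) : ℂ) • (A i - (minEig (A i) : ℂ) • 1)
        = A i - (minEig (A i) : ℂ) • 1 := by
      rw [← Finset.sum_smul, ← Complex.ofReal_sum, ← Finset.sum_div, hwb,
        div_self hwBpos.ne', Complex.ofReal_one, one_smul]
    have e3 : ∑ j, ((minEig (A i) * minEig (B j) * (wA + wB - 1) / (wA * wB) : ℝ) : ℂ) • 1
        = ((minEig (A i) * (wA + wB - 1) / wA : ℝ) : ℂ)
          • (1 : Matrix (Fin d) (Fin d) ℂ) := by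
      rw [← Finset.sum_smul, ← Complex.ofReal_sum]
      congr 2
      have h1 : ∑ j, minEig (A i) * minEig (B j) * (wA + wB - 1) / (wA * wB)
          = (minEig (A i) * (wA + wB - 1) / (wA * wB)) * ∑ j, minEig (B j) := by
        rw [Finset.mul_sum]
        exact Finset.sum_congr rfl fun j _ => by ring
      rw [h1, hwb]
      field_simp
    rw [Finset.sum_add_distrib, Finset.sum_add_distrib, e1, e2, e3, smul_smul]
    have hco : ((minEig (A i) / wA : ℝ) : ℂ) * ((1 - wB : ℝ) : ℂ)
        + ((minEig (A i) * (wA + wB - 1) / wA : ℝ) : ℂ) = ((minEig (A i) : ℝ) : ℂ) := by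
      have hr : minEig (A i) / wA * (1 - wB) + minEig (A i) * (wA + wB - 1) / wA
          = minEig (A i) := by field_simp; ring
      calc ((minEig (A i) / wA : ℝ) : ℂ) * ((1 - wB : ℝ) : ℂ)
            + ((minEig (A i) * (wA + wB - 1) / wA : ℝ) : ℂ)
          = ((minEig (A i) / wA * (1 - wB)
            + minEig (A i) * (wA + wB - 1) / wA : ℝ) : ℂ) := by push_cast; ring
        _ = _ := by rw [hr]
    rw [add_right_comm, ← add_smul, hco]
    abel
  · intro j
    have e1 : ∑ i, ((minEig (A i) / wA : ℝ) : ℂ) • (B j - (minEig (B j) : ℂ) • 1)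
        = B j - (minEig (B j) : ℂ) • 1 := by
      rw [← Finset.sum_smul, ← Complex.ofReal_sum, ← Finset.sum_div, hwa,
        div_self hwApos.ne', Complex.ofReal_one, one_smul]
    have e2 : ∑ i, ((minEig (B j) / wB : ℝ) : ℂ) • (A i - (minEig (A i) : ℂ) • 1)
        = ((minEig (B j) / wB : ℝ) : ℂ) • ((((1 - wA : ℝ)) : ℂ) • 1) := by
      rw [← Finset.smul_sum, sum_sub_minEig A hAsum, hwa]
    have e3 : ∑ i, ((minEig (A i) * minEig (B j) * (wA + wB - 1) / (wA * wB) : ℝ) : ℂ) • 1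
        = ((minEig (B j) * (wA + wB - 1) / wB : ℝ) : ℂ)
          • (1 : Matrix (Fin d) (Fin d) ℂ) := by
      rw [← Finset.sum_smul, ← Complex.ofReal_sum]
      congr 2
      have h1 : ∑ i, minEig (A i) * minEig (B j) * (wA + wB - 1) / (wA * wB)
          = (minEig (B j) * (wA + wB - 1) / (wA * wB)) * ∑ i, minEig (A i) := by
        rw [Finset.mul_sum]
        exact Finset.sum_congr rfl fun i _ => by ring
      rw [h1, hwa]
      field_simp
    rw [Finset.sum_add_distrib, Finset.sum_add_distrib, e1, e2, e3, smul_smul]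
    have hco : ((minEig (B j) / wB : ℝ) : ℂ) * ((1 - wA : ℝ) : ℂ)
        + ((minEig (B j) * (wA + wB - 1) / wB : ℝ) : ℂ) = ((minEig (B j) : ℝ) : ℂ) := by
      have hr : minEig (B j) / wB * (1 - wA) + minEig (B j) * (wA + wB - 1) / wB
          = minEig (B j) := by field_simp; ring
      calc ((minEig (B j) / wB : ℝ) : ℂ) * ((1 - wA : ℝ) : ℂ)
            + ((minEig (B j) * (wA + wB - 1) / wB : ℝ) : ℂ)
          = ((minEig (B j) / wB * (1 - wA)
            + minEig (B j) * (wA + wB - 1) / wB : ℝ) : ℂ) := by push_cast; ring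
        _ = _ := by rw [hr]
    rw [add_right_comm, add_assoc, ← add_smul, add_comm
      ((minEig (B j) * (wA + wB - 1) / wB : ℝ) : ℂ), hco]
    abel

/-- Noise content criterion: if `w(A) + w(B) ≥ 1` then the POVMs `A` and `B`
are compatible, i.e. they admit a joint POVM. -/
theorem noise_content_criterion {d k l : ℕ} (hd : 0 < d)
    (A : Fin k → Matrix (Fin d) (Fin d) ℂ) (B : Fin l → Matrix (Fin d) (Fin d) ℂ)
    (hA : ∀ i, (A i).PosSemidef) (hAsum : ∑ i, A i = 1)
    (hB : ∀ j, (B j).PosSemidef) (hBsum : ∑ j, B j = 1)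
    (hw : noiseContent A + noiseContent B ≥ 1) :
    ∃ G : Fin k → Fin l → Matrix (Fin d) (Fin d) ℂ,
      (∀ i j, (G i j).PosSemidef) ∧
      (∀ i, ∑ j, G i j = A i) ∧
      (∀ j, ∑ i, G i j = B j) := by
  classical
  simp only [noiseContent] at hw
  have hwA1 : ∑ i, minEig (A i) ≤ 1 := noise_le_one hd hA hAsum
  have hwB1 : ∑ j, minEig (B j) ≤ 1 := noise_le_one hd hB hBsum
  have han : ∀ i, 0 ≤ minEig (A i) := fun i => minEig_nonneg hd (hA i)
  have hbn : ∀ j, 0 ≤ minEig (B j) := fun j => minEig_nonneg hd (hB j)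
  by_cases hB1 : (1:ℝ) ≤ ∑ j, minEig (B j)
  · -- B consists of scalar matrices
    have hwB : ∑ j, minEig (B j) = 1 := le_antisymm hwB1 hB1
    refine ⟨fun i j => (minEig (B j) : ℂ) • A i,
      fun i j => smul_posSemidef (hbn j) (hA i), ?_, ?_⟩
    · intro i
      rw [← Finset.sum_smul, ← Complex.ofReal_sum, hwB]
      simp
    · intro j
      rw [← Finset.smul_sum, hAsum]
      exact (eq_scalar_of_noise_eq_one hB hBsum hwB j).symm
  by_cases hA1 : (1:ℝ) ≤ ∑ i, minEig (A i)
  · -- A consists of scalar matrices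
    have hwA : ∑ i, minEig (A i) = 1 := le_antisymm hwA1 hA1
    refine ⟨fun i j => (minEig (A i) : ℂ) • B j,
      fun i j => smul_posSemidef (han i) (hB j), ?_, ?_⟩
    · intro i
      rw [← Finset.smul_sum, hBsum]
      exact (eq_scalar_of_noise_eq_one hA hAsum hwA i).symm
    · intro j
      rw [← Finset.sum_smul, ← Complex.ofReal_sum, hwA]
      simp
  -- main case
  push_neg at hB1 hA1
  exact noise_main_case A B hA hAsum hB hBsum han hbn _ _ rfl rfl
    (by linarith) (by linarith) (by linarith)
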